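/- For all integers n ≥ j ≥ 0 and r ≥ 1, C(j+r,r) · ∑_{k=j}^{n} C(n+r,k+r)·{k+r brace j+r}·B_{n−k}^{(r)} = C(n+r,r)·{n brace j} (an identity in the rational numbers). In particular, for r = 1: (j+1) · ∑_{k=j}^{n} C(n+1,k+1)·{k+1 brace j+1}·B_{n−k} = (n+1)·{n brace j}, where B_j are the classical Bernoulli numbers (with B_1 = −1/2). -/

import Mathlib

/-- Stirling numbers of the second kind. -/
def stirling2 : ℕ → ℕ → ℕ
  | 0, 0 => 1
  | 0, _ + 1 => 0
  | _ + 1, 0 => 0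
  | n + 1, k + 1 => (k + 1) * stirling2 n (k + 1) + stirling2 n k

/-- Higher-order Bernoulli numbers `B_n^{(r)}`, with `bernoulli 1 = -1/2`. -/
def bernHigher : ℕ → ℕ → ℚ
  | 0, n => if n = 0 then 1 else 0
  | r + 1, n =>
      ∑ k ∈ Finset.range (n + 1), (n.choose k : ℚ) * bernoulli k * bernHigher r (n - k)

open Finset PowerSeries

lemma stirling2_zero_right : ∀ n, stirling2 n 0 = if n = 0 then 1 else 0
  | 0 => rfl
  | _ + 1 => rfl

lemma stirling2_eq_zero : ∀ n p, n < p → stirling2 n p = 0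
  | 0, _ + 1, _ => rfl
  | n + 1, p + 1, h => by
      rw [stirling2, stirling2_eq_zero n (p + 1) (by omega), stirling2_eq_zero n p (by omega)]
      ring

lemma sum_choose_stirling2 : ∀ n q, (∑ t ∈ range (n + 1), n.choose t * stirling2 t q) =
    stirling2 (n + 1) (q + 1)
  | 0, q => by
      cases q <;> simp [stirling2, stirling2_zero_right]
  | n + 1, q => by
      rw [Finset.sum_range_succ' _ (n + 1)]
      have h1 : ∀ i ∈ range (n + 1), (n + 1).choose (i + 1) * stirling2 (i + 1) q
          = n.choose i * stirling2 (i + 1) q + n.choose (i + 1) * stirling2 (i + 1) q := by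
        intro i _; rw [Nat.choose_succ_succ, add_mul]
      rw [Finset.sum_congr rfl h1, Finset.sum_add_distrib]
      have h2 : (∑ i ∈ range (n + 1), n.choose (i + 1) * stirling2 (i + 1) q)
          + (n + 1).choose 0 * stirling2 0 q = stirling2 (n + 1) (q + 1) := by
        have := sum_choose_stirling2 n q
        rw [Finset.sum_range_succ' _ n] at this
        rw [Nat.choose_zero_right, ← this, Finset.sum_range_succ, Nat.choose_succ_self]
        simp
      rw [add_assoc, h2]
      cases q with
      | zero =>
          have : ∀ i ∈ range (n + 1), n.choose i * stirling2 (i + 1) 0 = 0 := by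
            intro i _; simp [stirling2]
          rw [Finset.sum_congr rfl this]
          simp [stirling2, stirling2_zero_right]
      | succ q' =>
          have h3 : ∀ i ∈ range (n + 1), n.choose i * stirling2 (i + 1) (q' + 1)
              = (q' + 1) * (n.choose i * stirling2 i (q' + 1)) + n.choose i * stirling2 i q' := by
            intro i _; rw [stirling2]; ring
          rw [Finset.sum_congr rfl h3, Finset.sum_add_distrib, ← Finset.mul_sum,
            sum_choose_stirling2 n (q' + 1), sum_choose_stirling2 n q']
          conv_rhs => rw [stirling2]
          ring

lemma coeff_mk_mul_mk (a b : ℕ → ℚ) (n : ℕ) :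
    PowerSeries.coeff n (PowerSeries.mk (fun i => a i / i.factorial) *
      PowerSeries.mk (fun i => b i / i.factorial)) =
    (∑ k ∈ range (n + 1), (n.choose k : ℚ) * a k * b (n - k)) / n.factorial := by
  rw [PowerSeries.coeff_mul, Finset.Nat.sum_antidiagonal_eq_sum_range_succ_mk, Finset.sum_div]
  refine Finset.sum_congr rfl fun k hk => ?_
  have hk' : k ≤ n := by simpa using Nat.lt_succ_iff.mp (Finset.mem_range.mp hk)
  rw [PowerSeries.coeff_mk, PowerSeries.coeff_mk, Nat.cast_choose ℚ hk']
  have h1 : (k.factorial : ℚ) ≠ 0 := Nat.cast_ne_zero.mpr k.factorial_ne_zero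
  have h2 : ((n - k).factorial : ℚ) ≠ 0 := Nat.cast_ne_zero.mpr (n - k).factorial_ne_zero
  have h3 : (n.factorial : ℚ) ≠ 0 := Nat.cast_ne_zero.mpr n.factorial_ne_zero
  field_simp

lemma exp_sub_one_eq :
    PowerSeries.exp ℚ - 1 = PowerSeries.mk fun i => (if i = 0 then 0 else 1 : ℚ) / i.factorial := by
  ext n
  rw [map_sub, PowerSeries.coeff_exp, PowerSeries.coeff_mk, PowerSeries.coeff_one]
  cases n <;> simp

lemma bernoulliPS_eq :
    bernoulliPowerSeries ℚ = PowerSeries.mk fun i => (bernoulli i : ℚ) / i.factorial := by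
  ext n
  simp [bernoulliPowerSeries]

lemma expSubOne_pow (p : ℕ) : (PowerSeries.exp ℚ - 1) ^ p =
    PowerSeries.mk fun n => (p.factorial * stirling2 n p : ℚ) / n.factorial := by
  induction p with
  | zero =>
      ext n
      rw [pow_zero, PowerSeries.coeff_one, PowerSeries.coeff_mk]
      cases n with
      | zero => simp [stirling2]
      | succ m => simp [stirling2]
  | succ p ih =>
      rw [pow_succ, ih, exp_sub_one_eq]
      ext n
      rw [PowerSeries.coeff_mk, coeff_mk_mul_mk]
      have key : (∑ k ∈ range (n + 1),
          (n.choose k : ℚ) * (p.factorial * stirling2 k p) * (if n - k = 0 then 0 else 1))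
          = p.factorial * ((p + 1) * stirling2 n (p + 1)) := by
        have h1 : ∀ k ∈ range (n + 1),
            (n.choose k : ℚ) * (p.factorial * stirling2 k p) * (if n - k = 0 then 0 else 1)
            = (n.choose k : ℚ) * (p.factorial * stirling2 k p)
              - (if k = n then (n.choose k : ℚ) * (p.factorial * stirling2 k p) else 0) := by
          intro k hk
          have hk' : k ≤ n := by simpa using Nat.lt_succ_iff.mp (Finset.mem_range.mp hk)
          rcases eq_or_ne k n with rfl | h
          · simp
          · rw [if_neg (by omega), if_neg h]; ring
        rw [Finset.sum_congr rfl h1, Finset.sum_sub_distrib, Finset.sum_ite_eq' (range (n + 1))]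
        rw [if_pos (Finset.self_mem_range_succ n)]
        have h2 : (∑ k ∈ range (n + 1), (n.choose k : ℚ) * (p.factorial * stirling2 k p))
            = p.factorial * stirling2 (n + 1) (p + 1) := by
          rw [← sum_choose_stirling2 n p]
          push_cast
          rw [Finset.mul_sum]
          exact Finset.sum_congr rfl fun k _ => by ring
        rw [h2, Nat.choose_self, stirling2]
        push_cast
        ring
      rw [key, Nat.factorial_succ]
      push_cast
      ring

lemma bernoulliPS_pow (r : ℕ) : bernoulliPowerSeries ℚ ^ r =
    PowerSeries.mk fun n => bernHigher r n / n.factorial := by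
  induction r with
  | zero =>
      ext n
      rw [pow_zero, PowerSeries.coeff_one, PowerSeries.coeff_mk]
      cases n with
      | zero => simp [bernHigher]
      | succ m => simp [bernHigher]
  | succ r ih =>
      rw [pow_succ', ih, bernoulliPS_eq]
      ext n
      rw [coeff_mk_mul_mk, PowerSeries.coeff_mk]
      congr 1

lemma key_ps (j r : ℕ) :
    (PowerSeries.mk fun n => ((j + r).factorial * stirling2 n (j + r) : ℚ) / n.factorial) *
      (PowerSeries.mk fun n => bernHigher r n / n.factorial) =
    X ^ r * PowerSeries.mk fun n => (j.factorial * stirling2 n j : ℚ) / n.factorial := by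
  rw [← expSubOne_pow, ← bernoulliPS_pow, ← expSubOne_pow, pow_add]
  have h := bernoulliPowerSeries_mul_exp_sub_one ℚ
  calc (PowerSeries.exp ℚ - 1) ^ j * (PowerSeries.exp ℚ - 1) ^ r * bernoulliPowerSeries ℚ ^ r
      = (PowerSeries.exp ℚ - 1) ^ j * (bernoulliPowerSeries ℚ * (PowerSeries.exp ℚ - 1)) ^ r := by
        rw [mul_pow]; ring
    _ = X ^ r * (PowerSeries.exp ℚ - 1) ^ j := by rw [h]; ring

lemma key_coeff (n j r : ℕ) :
    (∑ k ∈ range (n + r + 1),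
        ((n + r).choose k : ℚ) * ((j + r).factorial * stirling2 k (j + r)) *
          bernHigher r (n + r - k)) / (n + r).factorial
    = (j.factorial * stirling2 n j : ℚ) / n.factorial := by
  have := congrArg (PowerSeries.coeff (R := ℚ) (n + r)) (key_ps j r)
  rwa [coeff_mk_mul_mk, PowerSeries.coeff_X_pow_mul, PowerSeries.coeff_mk] at this

lemma gen_identity (n j r : ℕ) :
    ((j + r).choose r : ℚ) * ∑ k ∈ Finset.Icc j n,
        ((n + r).choose (k + r) : ℚ) * (stirling2 (k + r) (j + r) : ℚ) * bernHigher r (n - k) =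
      ((n + r).choose r : ℚ) * (stirling2 n j : ℚ) := by
  set T : ℚ := (stirling2 n j : ℚ) with hT
  set S : ℚ := ∑ k ∈ Finset.Icc j n,
      ((n + r).choose (k + r) : ℚ) * (stirling2 (k + r) (j + r) : ℚ) * bernHigher r (n - k)
    with hS
  have hF : (∑ k ∈ range (n + r + 1), ((n + r).choose k : ℚ) *
      ((j + r).factorial * stirling2 k (j + r)) * bernHigher r (n + r - k))
      = (j + r).factorial * S := by
    rw [hS, Finset.mul_sum]
    have hsub : Finset.Icc (j + r) (n + r) ⊆ range (n + r + 1) := by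
      intro x hx
      simp only [Finset.mem_Icc] at hx
      exact Finset.mem_range.mpr (by omega)
    have hvan : ∀ x ∈ range (n + r + 1), x ∉ Finset.Icc (j + r) (n + r) →
        ((n + r).choose x : ℚ) * ((j + r).factorial * stirling2 x (j + r))
          * bernHigher r (n + r - x) = 0 := by
      intro x hx hx'
      simp only [Finset.mem_range] at hx
      simp only [Finset.mem_Icc] at hx'
      have : x < j + r := by omega
      rw [stirling2_eq_zero x (j + r) this]
      push_cast
      ring
    rw [← Finset.sum_subset hsub hvan, ← Finset.map_add_right_Icc, Finset.sum_map]
    refine Finset.sum_congr rfl fun k hk => ?_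
    simp only [addRightEmbedding_apply]
    rw [Nat.add_sub_add_right]
    ring
  have h := key_coeff n j r
  rw [hF] at h
  have hn' : ((n + r).factorial : ℚ) ≠ 0 := Nat.cast_ne_zero.mpr (Nat.factorial_ne_zero _)
  have hn'' : (n.factorial : ℚ) ≠ 0 := Nat.cast_ne_zero.mpr (Nat.factorial_ne_zero _)
  rw [div_eq_div_iff hn' hn''] at h
  have e1 : ((j + r).choose r : ℚ) * r.factorial * j.factorial = (j + r).factorial := by
    have := Nat.choose_mul_factorial_mul_factorial (Nat.le_add_left r j)
    rw [Nat.add_sub_cancel] at this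
    exact_mod_cast this
  have e2 : ((n + r).choose r : ℚ) * r.factorial * n.factorial = (n + r).factorial := by
    have := Nat.choose_mul_factorial_mul_factorial (Nat.le_add_left r n)
    rw [Nat.add_sub_cancel] at this
    exact_mod_cast this
  have hc : (r.factorial * j.factorial * n.factorial : ℚ) ≠ 0 := by
    have h1 : (r.factorial : ℚ) ≠ 0 := Nat.cast_ne_zero.mpr (Nat.factorial_ne_zero _)
    have h2 : (j.factorial : ℚ) ≠ 0 := Nat.cast_ne_zero.mpr (Nat.factorial_ne_zero _)
    positivity
  apply mul_right_cancel₀ hc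
  linear_combination h + S * (n.factorial : ℚ) * e1 - T * (j.factorial : ℚ) * e2

lemma bernHigher_one (n : ℕ) : bernHigher 1 n = bernoulli n := by
  show (∑ k ∈ Finset.range (n + 1), (n.choose k : ℚ) * bernoulli k * bernHigher 0 (n - k)) = _
  have h1 : ∀ k ∈ range (n + 1), (n.choose k : ℚ) * bernoulli k * bernHigher 0 (n - k)
      = if k = n then (bernoulli n : ℚ) else 0 := by
    intro k hk
    have hk' : k ≤ n := by simpa using Nat.lt_succ_iff.mp (Finset.mem_range.mp hk)
    rcases eq_or_ne k n with rfl | h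
    · simp [bernHigher]
    · have : n - k ≠ 0 := by omega
      simp [bernHigher, this, h]
  rw [Finset.sum_congr rfl h1, Finset.sum_ite_eq' (range (n + 1)),
    if_pos (Finset.self_mem_range_succ n)]

/-- For `n ≥ j ≥ 0` and `r ≥ 1`,
`C(j+r,r) ∑_{k=j}^n C(n+r,k+r) {k+r brace j+r} B_{n-k}^{(r)} = C(n+r,r) {n brace j}`;
in particular for `r = 1`,
`(j+1) ∑_{k=j}^n C(n+1,k+1) {k+1 brace j+1} B_{n-k} = (n+1) {n brace j}`. -/
theorem choose_mul_sum_stirling_bernHigher (n j r : ℕ) (hj : j ≤ n) (hr : 1 ≤ r) :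
    (((j + r).choose r : ℚ) * ∑ k ∈ Finset.Icc j n,
        ((n + r).choose (k + r) : ℚ) * (stirling2 (k + r) (j + r) : ℚ) * bernHigher r (n - k) =
      ((n + r).choose r : ℚ) * (stirling2 n j : ℚ)) ∧
    (((j : ℚ) + 1) * ∑ k ∈ Finset.Icc j n,
        ((n + 1).choose (k + 1) : ℚ) * (stirling2 (k + 1) (j + 1) : ℚ) * bernoulli (n - k) =
      ((n : ℚ) + 1) * (stirling2 n j : ℚ)) := by
  constructor
  · exact gen_identity n j r
  · have h := gen_identity n j 1
    rw [Nat.choose_one_right, Nat.choose_one_right] at h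
    push_cast at h
    rw [← h]
    congr 1
    refine Finset.sum_congr rfl fun k _ => ?_
    rw [bernHigher_one]
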